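/- Let 0 < a ≤ b and let (B_k) be symmetric matrices with aI ⪯ B_k ⪯ bI for all k. If there is an infinite set K ⊆ ℕ and a point x* ∈ ℝⁿ such that x_k → x* and d_{B_k}(x_k) → 0 as k → ∞ along K, then x* is Pareto critical. -/

import Mathlib

open RealInnerProductSpace

noncomputable section

abbrev E (n : ℕ) := EuclideanSpace ℝ (Fin n)

def maxD {n m : ℕ} [NeZero m] (f : Fin m → E n → ℝ) (x d : E n) : ℝ :=
  Finset.univ.sup' Finset.univ_nonempty (fun i => ⟪gradient (f i) x, d⟫)

def ParetoCritical {n m : ℕ} (f : Fin m → E n → ℝ) (x : E n) : Prop :=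
  ∀ d : E n, ∃ i, 0 ≤ ⟪gradient (f i) x, d⟫

def quad {n : ℕ} (B : Matrix (Fin n) (Fin n) ℝ) (d : E n) : ℝ :=
  ∑ i, ∑ j, d i * B i j * d j

lemma quad_eq_dot {n : ℕ} (Bm : Matrix (Fin n) (Fin n) ℝ) (w : E n) :
    quad Bm w = dotProduct (fun i => w i) (Bm.mulVec fun i => w i) := by
  simp only [quad, dotProduct, Matrix.mulVec, Finset.mul_sum]
  exact Finset.sum_congr rfl fun i _ => Finset.sum_congr rfl fun j _ => by ring

lemma quad_smul' {n : ℕ} (Bm : Matrix (Fin n) (Fin n) ℝ) (t : ℝ) (w : E n) :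
    quad Bm (t • w) = t ^ 2 * quad Bm w := by
  simp only [quad, PiLp.smul_apply, smul_eq_mul, Finset.mul_sum]
  exact Finset.sum_congr rfl fun i _ => Finset.sum_congr rfl fun j _ => by ring

/-- if x_k → x* and d_{B_k}(x_k) → 0 along a subsequence, with
aI ⪯ B_k ⪯ bI, then x* is Pareto critical. -/
theorem stmt7 {n m : ℕ} [NeZero m] (f : Fin m → E n → ℝ)
    (hf : ∀ i, ContDiff ℝ 1 (f i))
    (a b : ℝ) (ha : 0 < a) (hab : a ≤ b)
    (B : ℕ → Matrix (Fin n) (Fin n) ℝ) (hsymm : ∀ k, (B k).IsSymm)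
    (hBlow : ∀ k, (B k - a • (1 : Matrix (Fin n) (Fin n) ℝ)).PosSemidef)
    (hBup : ∀ k, ((b • (1 : Matrix (Fin n) (Fin n) ℝ)) - B k).PosSemidef)
    (x d : ℕ → E n)
    (hd : ∀ k, ∀ dd : E n, maxD f (x k) (d k) + quad (B k) (d k) / 2 ≤
        maxD f (x k) dd + quad (B k) dd / 2)
    (xs : E n) (φ : ℕ → ℕ) (hφ : StrictMono φ)
    (hx : Filter.Tendsto (fun k => x (φ k)) Filter.atTop (nhds xs))
    (hd0 : Filter.Tendsto (fun k => d (φ k)) Filter.atTop (nhds (0 : E n))) :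
    ParetoCritical f xs := by
  -- continuity of gradients
  have hgc : ∀ i, Continuous fun y => gradient (f i) y := by
    intro i
    simp only [gradient]
    exact (LinearIsometryEquiv.continuous _).comp ((hf i).continuous_fderiv one_ne_zero)
  -- convergence of maxD
  have hmax : ∀ (xf df : ℕ → E n) (xl dl : E n),
      Filter.Tendsto xf Filter.atTop (nhds xl) →
      Filter.Tendsto df Filter.atTop (nhds dl) →
      Filter.Tendsto (fun k => maxD f (xf k) (df k)) Filter.atTop
        (nhds (maxD f xl dl)) := by
    intro xf df xl dl hxf hdf
    simp only [maxD]
    exact Filter.Tendsto.finset_sup'_nhds_apply _ (fun i _ =>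
      (((hgc i).continuousAt.tendsto).comp hxf).inner hdf)
  -- nonnegativity of quad
  have hq0 : ∀ k (w : E n), 0 ≤ quad (B k) w := by
    intro k w
    have h := (hBlow k).dotProduct_mulVec_nonneg (fun i => w i)
    have hdot : 0 ≤ dotProduct (fun i => w i) (fun i => w i) := by
      simp only [dotProduct]
      exact Finset.sum_nonneg fun i _ => mul_self_nonneg _
    simp only [star_trivial, Matrix.sub_mulVec, Matrix.smul_mulVec,
      Matrix.one_mulVec, dotProduct_sub, dotProduct_smul, smul_eq_mul] at h
    rw [quad_eq_dot]
    nlinarith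
  -- upper bound on quad
  have hqub : ∀ k (w : E n),
      quad (B k) w ≤ b * dotProduct (fun i => w i) (fun i => w i) := by
    intro k w
    have h := (hBup k).dotProduct_mulVec_nonneg (fun i => w i)
    simp only [star_trivial, Matrix.sub_mulVec, Matrix.smul_mulVec,
      Matrix.one_mulVec, dotProduct_sub, dotProduct_smul, smul_eq_mul] at h
    rw [quad_eq_dot]
    linarith
  -- positive scaling of maxD
  have hms : ∀ (y v : E n) (t : ℝ), 0 ≤ t → maxD f y (t • v) = t * maxD f y v := by
    intro y v t ht
    simp only [maxD, real_inner_smul_right]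
    exact (Finset.comp_sup'_eq_sup'_comp _ (fun r => t * r)
      (fun p q => mul_max_of_nonneg p q ht)).symm
  intro v
  set M := maxD f xs v with hM
  suffices hMpos : 0 ≤ M by
    obtain ⟨i, _, hie⟩ := Finset.exists_mem_eq_sup' Finset.univ_nonempty
      (fun i => ⟪gradient (f i) xs, v⟫)
    exact ⟨i, by rw [← hie]; exact hMpos⟩
  set Cq : ℝ := b * dotProduct (fun i => v i) (fun i => v i) with hCqdef
  have hCq : 0 ≤ Cq := by
    have hdot : 0 ≤ dotProduct (fun i => v i) (fun i => v i) :=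
      Finset.sum_nonneg fun i _ => mul_self_nonneg _
    exact mul_nonneg (ha.le.trans hab) hdot
  -- for every positive t, 0 ≤ t*M + t^2*Cq/2
  have key : ∀ t : ℝ, 0 < t → 0 ≤ t * M + t ^ 2 * Cq / 2 := by
    intro t ht
    have hle : ∀ k, maxD f (x (φ k)) (d (φ k)) ≤
        t * maxD f (x (φ k)) v + t ^ 2 * Cq / 2 := by
      intro k
      have h1 := hd (φ k) (t • v)
      have h2 := hq0 (φ k) (d (φ k))
      have h3 := hqub (φ k) v
      rw [hms (x (φ k)) v t ht.le, quad_smul'] at h1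
      nlinarith [sq_nonneg t]
    have hL : Filter.Tendsto (fun k => maxD f (x (φ k)) (d (φ k)))
        Filter.atTop (nhds 0) := by
      have h0 : maxD f xs (0 : E n) = 0 := by
        simp [maxD, inner_zero_right]
      have := hmax (fun k => x (φ k)) (fun k => d (φ k)) xs 0 hx hd0
      rwa [h0] at this
    have hR : Filter.Tendsto (fun k => t * maxD f (x (φ k)) v + t ^ 2 * Cq / 2)
        Filter.atTop (nhds (t * M + t ^ 2 * Cq / 2)) := by
      have := hmax (fun k => x (φ k)) (fun _ => v) xs v hx tendsto_const_nhds
      exact ((this.const_mul t).add tendsto_const_nhds)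
    exact le_of_tendsto_of_tendsto' hL hR hle
  by_contra hMneg
  push_neg at hMneg
  set t : ℝ := -M / (Cq + 1) with htdef
  have hpos : (0:ℝ) < Cq + 1 := by linarith
  have ht : 0 < t := div_pos (by linarith) hpos
  have h1 := key t ht
  have h2 : 0 ≤ M + t * Cq / 2 := by nlinarith [mul_pos ht ht]
  have ht2 : t * (Cq + 1) = -M := by
    rw [htdef, div_mul_cancel₀ _ hpos.ne']
  nlinarith [mul_nonneg h2 hpos.le, mul_nonneg (mul_nonneg ht.le hCq) hCq]
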